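/- In a right uniform semigroup satisfying the ascending chain condition on right congruences, every element is left cancellable or left nilpotent. -/
import Mathlib


universe u

/-- A right action of a semigroup `S` on a set `A`. -/
def IsRightAct (S : Type u) [Semigroup S] {A : Type u} (act : A → S → A) : Prop :=
  ∀ (a : A) (s t : S), act a (s * t) = act (act a s) t

/-- An `S`-homomorphism between right `S`-acts. -/
def IsActHom {S : Type u} [Semigroup S] {A B : Type u} (actA : A → S → A)
    (actB : B → S → B) (f : A → B) : Prop :=
  ∀ (a : A) (s : S), f (actA a s) = actB (f a) s

/-- A zero element of a right `S`-act. -/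
def IsZeroElem {S : Type u} [Semigroup S] {A : Type u} (act : A → S → A) (θ : A) : Prop :=
  ∀ s : S, act θ s = θ

/-- A subact of a right `S`-act. -/
def IsSubact {S : Type u} [Semigroup S] {A : Type u} (act : A → S → A) (B : Set A) : Prop :=
  B.Nonempty ∧ ∀ b ∈ B, ∀ s : S, act b s ∈ B

/-- `B` is large in `A`: every `S`-homomorphism from `A` injective on `B` is injective. -/
def LargeIn {S : Type u} [Semigroup S] {A : Type u} (act : A → S → A) (B : Set A) : Prop :=
  ∀ (C : Type u) (actC : C → S → C), IsRightAct S actC →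
    ∀ f : A → C, IsActHom act actC f → Set.InjOn f B → Function.Injective f

/-- A right `S`-act is uniform if every nonzero subact is large. -/
def UniformAct {S : Type u} [Semigroup S] {A : Type u} (act : A → S → A) : Prop :=
  ∀ B : Set A, IsSubact act B → (∃ b ∈ B, ¬ IsZeroElem act b) → LargeIn act B

/-- A semigroup is right uniform if `S` as a right `S`-act over itself is uniform. -/
def RightUniform (S : Type u) [Semigroup S] : Prop :=
  UniformAct (fun (a : S) (s : S) => a * s)

/-- A right congruence on a semigroup. -/
def IsRightCongruence {S : Type u} [Semigroup S] (r : S → S → Prop) : Prop :=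
  Equivalence r ∧ ∀ a b : S, r a b → ∀ s : S, r (a * s) (b * s)

/-- Ascending chain condition on right congruences. -/
def ACCRightCongruences (S : Type u) [Semigroup S] : Prop :=
  ∀ f : ℕ → (S → S → Prop), (∀ n, IsRightCongruence (f n)) →
    (∀ n, ∀ a b : S, f n a b → f (n + 1) a b) →
    ∃ N : ℕ, ∀ n : ℕ, N ≤ n → f n = f N

/-- `spow c n` is the power `c ^ (n + 1)` in a semigroup. -/
def spow {S : Type u} [Semigroup S] (c : S) : ℕ → S
  | 0 => c
  | n + 1 => spow c n * c

/-- An element is left nilpotent if some power of it is a left zero. -/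
def IsLeftNilpotent {S : Type u} [Semigroup S] (c : S) : Prop :=
  ∃ n : ℕ, ∀ s : S, spow c n * s = spow c n

/-- The right congruence annihilator of an element. -/
def annRel {S : Type u} [Semigroup S] (c : S) : S → S → Prop :=
  fun s t => c * s = c * t

lemma mul_spow_eq {S : Type u} [Semigroup S] (c : S) :
    ∀ n, c * spow c n = spow c n * c := by
  intro n
  induction n with
  | zero => rfl
  | succ n ih =>
    show c * (spow c n * c) = _
    rw [← mul_assoc, ih]
    rfl

lemma spow_add {S : Type u} [Semigroup S] (c : S) :
    ∀ n m, spow c n * spow c m = spow c (n + m + 1) := by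
  intro n m
  induction m with
  | zero => rfl
  | succ m ih =>
    show spow c n * (spow c m * c) = spow c (n + m + 1) * c
    rw [← mul_assoc, ih]

lemma spow_mul_congr {S : Type u} [Semigroup S] {c x y : S} (h : c * x = c * y) :
    ∀ n, spow c n * x = spow c n * y := by
  intro n
  induction n with
  | zero => exact h
  | succ n _ =>
    show spow c n * c * x = spow c n * c * y
    rw [mul_assoc, mul_assoc, h]

lemma annRel_congruence {S : Type u} [Semigroup S] (d : S) :
    IsRightCongruence (annRel d) := by
  refine ⟨⟨fun a => rfl, fun h => h.symm, fun h1 h2 => h1.trans h2⟩, ?_⟩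
  intro a b h s
  show d * (a * s) = d * (b * s)
  rw [← mul_assoc, ← mul_assoc, h]

lemma annRel_mono {S : Type u} [Semigroup S] (c : S) (n : ℕ) (a b : S)
    (h : annRel (spow c n) a b) : annRel (spow c (n + 1)) a b := by
  show spow c n * c * a = spow c n * c * b
  rw [← mul_spow_eq, mul_assoc, mul_assoc, h]

theorem stmt15 {S : Type u} [Semigroup S] (hacc : ACCRightCongruences S)
    (hu : RightUniform S) (c : S) :
    (∀ x y : S, c * x = c * y → x = y) ∨ IsLeftNilpotent c := by
  obtain ⟨N, hN⟩ := hacc (fun n => annRel (spow c n))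
    (fun n => annRel_congruence _) (annRel_mono c)
  set d : S := spow c N with hd
  -- ann(d * d) = ann(d)
  have hdd : d * d = spow c (N + N + 1) := spow_add c N N
  have hstab : ∀ a b : S, (d * d) * a = (d * d) * b → d * a = d * b := by
    intro a b h
    have h2 : annRel (spow c (N + N + 1)) a b := by rw [← hdd]; exact h
    have := hN (N + N + 1) (by omega)
    rw [this] at h2
    exact h2
  set B : Set S := Set.range (fun s => d * s) with hB
  have hsub : IsSubact (fun (a : S) (s : S) => a * s) B :=
    ⟨⟨d * d, d, rfl⟩, by rintro b ⟨t, rfl⟩ s; exact ⟨t * s, (mul_assoc _ _ _).symm⟩⟩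
  by_cases hz : ∃ b ∈ B, ¬ IsZeroElem (fun (a : S) (s : S) => a * s) b
  · -- build quotient act by annRel d
    left
    let s0 : Setoid S := ⟨annRel d, (annRel_congruence d).1⟩
    let C := Quotient s0
    let actC : C → S → C := fun q s =>
      Quot.lift (fun a => Quotient.mk s0 (a * s))
        (fun a b h => Quotient.sound ((annRel_congruence d).2 a b h s)) q
    have hact : IsRightAct S actC := by
      intro a s t
      induction a using Quot.ind with
      | _ a => exact congrArg (Quotient.mk s0) (mul_assoc a s t).symm
    have hhom : IsActHom (fun (a : S) (s : S) => a * s) actC (Quotient.mk s0) :=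
      fun a s => rfl
    have hinjB : Set.InjOn (Quotient.mk s0) B := by
      rintro _ ⟨a, rfl⟩ _ ⟨b, rfl⟩ h
      have h' : annRel d (d * a) (d * b) := Quotient.exact h
      have h'' : (d * d) * a = (d * d) * b := by
        rw [mul_assoc, mul_assoc]; exact h'
      exact hstab a b h''
    have hinj := hu B hsub hz C actC hact (Quotient.mk s0) hhom hinjB
    intro x y hxy
    exact hinj (Quotient.sound (spow_mul_congr hxy N))
  · right
    push_neg at hz
    have := hz (d * d) ⟨d, rfl⟩
    refine ⟨N + N + 1, ?_⟩
    intro s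
    rw [← hdd]
    exact (this s).trans rfl
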